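/- Let f : M → N be a morphism of O-modules. Then f is an α-isomorphism if and only if the induced map m ⊗_O M → m ⊗_O N is an isomorphism. -/

import Mathlib

/-!
`O` is the valuation ring of the `p`-adic completion of an algebraic closure of `ℚ_p`,
encoded abstractly as a valuation ring (local domain) with idempotent, flat maximal ideal `m`.
The statement: a morphism `f : M → N` of `O`-modules is an α-isomorphism (kernel and cokernel
annihilated by every element of `m`) iff the induced map `m ⊗_O M → m ⊗_O N` is an isomorphism.
-/

universe u

open IsLocalRing TensorProduct

/-- A morphism of `O`-modules is an α-isomorphism (w.r.t. the ideal `m`) if its kernel and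
cokernel are annihilated by every element of `m`. -/
def IsAlphaIso {O : Type u} [CommRing O] (m : Ideal O)
    {M N : Type u} [AddCommGroup M] [Module O M] [AddCommGroup N] [Module O N]
    (f : M →ₗ[O] N) : Prop :=
  (∀ γ ∈ m, ∀ x ∈ LinearMap.ker f, γ • x = 0) ∧
    (∀ γ ∈ m, ∀ y : N, γ • y ∈ LinearMap.range f)

/-- For an idempotent ideal `m`, `m • K = 0` iff `m ⊗ K = 0`. -/
lemma tensor_eq_zero_iff_smul_eq_zero {O : Type u} [CommRing O] (m : Ideal O)
    (hidem : m * m = m)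
    (K : Type u) [AddCommGroup K] [Module O K] :
    (∀ γ ∈ m, ∀ x : K, γ • x = 0) ↔ ∀ z : m ⊗[O] K, z = 0 := by
  constructor
  · intro h z
    induction z using TensorProduct.induction_on with
    | zero => rfl
    | add a b ha hb => rw [ha, hb, add_zero]
    | tmul γ x =>
      obtain ⟨γ, hγ⟩ := γ
      have hγ' : γ ∈ m * m := hidem.symm ▸ hγ
      revert hγ
      refine Submodule.mul_induction_on' (C := fun r hr =>
          ∀ h : r ∈ m, (⟨r, h⟩ : m) ⊗ₜ[O] x = 0) ?_ ?_ hγ'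
      · intro b hb c hc hbc
        have : (⟨b * c, hbc⟩ : m) = b • (⟨c, hc⟩ : m) := Subtype.ext (smul_eq_mul (α := O) ..).symm
        rw [this, TensorProduct.smul_tmul, h b hb x, TensorProduct.tmul_zero]
      · intro a ha b hb Ca Cb hab
        have ha' : a ∈ m := hidem ▸ ha
        have hb' : b ∈ m := hidem ▸ hb
        have : (⟨a + b, hab⟩ : m) = (⟨a, ha'⟩ : m) + ⟨b, hb'⟩ := rfl
        rw [this, TensorProduct.add_tmul, Ca ha', Cb hb', add_zero]
  · intro h γ hγ x
    have : γ • x = TensorProduct.lift ((LinearMap.lsmul O K).comp m.subtype)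
        ((⟨γ, hγ⟩ : m) ⊗ₜ[O] x) := rfl
    rw [this, h ((⟨γ, hγ⟩ : m) ⊗ₜ[O] x), map_zero]

theorem isAlphaIso_iff_tensor_bijective
    (O : Type u) [CommRing O] [IsDomain O] [ValuationRing O]
    (hflat : Module.Flat O (maximalIdeal O))
    (hidem : maximalIdeal O * maximalIdeal O = maximalIdeal O)
    (M N : Type u) [AddCommGroup M] [Module O M] [AddCommGroup N] [Module O N]
    (f : M →ₗ[O] N) :
    IsAlphaIso (maximalIdeal O) f ↔
      Function.Bijective (LinearMap.lTensor (maximalIdeal O) f) := by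
  haveI := hflat
  set m := maximalIdeal O with hm
  -- kernel inclusion and cokernel projection
  set ι : LinearMap.ker f →ₗ[O] M := (LinearMap.ker f).subtype with hι
  set π : N →ₗ[O] N ⧸ LinearMap.range f := (LinearMap.range f).mkQ with hπ
  have hιexact : Function.Exact ι f := LinearMap.exact_subtype_ker_map f
  have hπexact : Function.Exact f π := LinearMap.exact_map_mkQ_range f
  have hιT : Function.Exact (ι.lTensor m) (f.lTensor m) :=
    Module.Flat.lTensor_exact m hιexact
  have hπT : Function.Exact (f.lTensor m) (π.lTensor m) :=
    lTensor_exact m hπexact (Submodule.mkQ_surjective _)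
  have hιinj : Function.Injective (ι.lTensor m) :=
    Module.Flat.lTensor_preserves_injective_linearMap ι (Submodule.injective_subtype _)
  have hπsurj : Function.Surjective (π.lTensor m) :=
    LinearMap.lTensor_surjective m (Submodule.mkQ_surjective _)
  constructor
  · rintro ⟨h1, h2⟩
    constructor
    · -- injectivity
      have hK : ∀ z : m ⊗[O] (LinearMap.ker f), z = 0 := by
        rw [← tensor_eq_zero_iff_smul_eq_zero m hidem]
        intro γ hγ x
        exact Subtype.ext (h1 γ hγ x.1 x.2)
      intro a b hab
      have : a - b ∈ LinearMap.ker (f.lTensor m) := by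
        simp [LinearMap.mem_ker, map_sub, hab]
      rw [LinearMap.exact_iff.mp hιT] at this
      obtain ⟨z, hz⟩ := this
      rw [hK z, map_zero] at hz
      exact sub_eq_zero.mp hz.symm
    · -- surjectivity
      have hC : ∀ z : m ⊗[O] (N ⧸ LinearMap.range f), z = 0 := by
        rw [← tensor_eq_zero_iff_smul_eq_zero m hidem]
        intro γ hγ x
        obtain ⟨y, rfl⟩ := Submodule.mkQ_surjective _ x
        rw [← map_smul, Submodule.mkQ_apply, Submodule.Quotient.mk_eq_zero]
        exact h2 γ hγ y
      intro w
      have : w ∈ LinearMap.range (f.lTensor m) := by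
        rw [← LinearMap.exact_iff.mp hπT]
        exact hC _
      exact this
  · rintro ⟨hinj, hsurj⟩
    constructor
    · intro γ hγ x hx
      have hK : ∀ z : m ⊗[O] (LinearMap.ker f), z = 0 := by
        intro z
        apply hιinj
        have : (f.lTensor m) ((ι.lTensor m) z) = 0 := by
          have := hιT.apply_apply_eq_zero z
          simpa using this
        rw [map_zero]
        exact hinj (by rw [this, map_zero])
      have := (tensor_eq_zero_iff_smul_eq_zero m hidem _).mpr hK γ hγ ⟨x, hx⟩
      exact congrArg Subtype.val this
    · intro γ hγ y
      have hC : ∀ z : m ⊗[O] (N ⧸ LinearMap.range f), z = 0 := by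
        intro z
        obtain ⟨w, rfl⟩ := hπsurj z
        obtain ⟨v, rfl⟩ := hsurj w
        have := hπT.apply_apply_eq_zero v
        simpa using this
      have := (tensor_eq_zero_iff_smul_eq_zero m hidem _).mpr hC γ hγ (π y)
      rw [← map_smul] at this
      rwa [← Submodule.Quotient.mk_eq_zero]
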